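/- Define B : ℝ × ℝ^D → (-∞, +∞] by B(a, b) = ‖b‖²/(2a) if a > 0, B(0, 0) = 0, and B(a, b) = +∞ otherwise. Then B is convex and lower semicontinuous, and B(a, b) = sup{ α·a + ⟨β, b⟩ : (α, β) ∈ ℝ × ℝ^D, α + ‖β‖²/2 ≤ 0 }. -/

import Mathlib

open Classical

open scoped BigOperators

/-- The Benamou–Brenier kinetic-energy integrand B(a,b) = ‖b‖²/(2a) for a > 0,
    B(0,0) = 0, +∞ otherwise. -/
noncomputable def bbFun (D : ℕ) (p : ℝ × EuclideanSpace ℝ (Fin D)) : EReal :=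
  if 0 < p.1 then ((‖p.2‖ ^ 2 / (2 * p.1) : ℝ) : EReal)
  else if p.1 = 0 ∧ p.2 = 0 then 0 else ⊤

private lemma ereal_eq_top_of_forall {y : EReal} (h : ∀ x : ℝ, (x : EReal) ≤ y) : y = ⊤ := by
  rw [EReal.eq_top_iff_forall_lt]
  intro z
  exact lt_of_lt_of_le (by exact_mod_cast lt_add_one z) (h (z + 1))

private lemma bb_sup (D : ℕ) (p : ℝ × EuclideanSpace ℝ (Fin D)) :
    bbFun D p =
      ⨆ q ∈ {q : ℝ × EuclideanSpace ℝ (Fin D) | q.1 + ‖q.2‖ ^ 2 / 2 ≤ 0},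
        ((q.1 * p.1 + (inner ℝ q.2 p.2 : ℝ) : ℝ) : EReal) := by
  obtain ⟨a, b⟩ := p
  rcases lt_trichotomy 0 a with ha | ha | ha
  · -- a > 0
    rw [bbFun, if_pos ha]
    apply le_antisymm
    · have hmem : ((-‖b‖ ^ 2 / (2 * a ^ 2), a⁻¹ • b) : ℝ × EuclideanSpace ℝ (Fin D)) ∈
          {q : ℝ × EuclideanSpace ℝ (Fin D) | q.1 + ‖q.2‖ ^ 2 / 2 ≤ 0} := by
        simp only [Set.mem_setOf_eq, norm_smul, Real.norm_eq_abs, abs_inv,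
          abs_of_pos ha, mul_pow]
        rw [inv_pow]
        apply le_of_eq
        field_simp
        ring
      refine le_trans (le_of_eq ?_) (le_iSup₂ _ hmem)
      norm_cast
      have : (inner ℝ (a⁻¹ • b) b : ℝ) = a⁻¹ * ‖b‖ ^ 2 := by
        rw [real_inner_smul_left, real_inner_self_eq_norm_sq]
      rw [this]
      field_simp
      ring
    · apply iSup₂_le
      rintro ⟨α, β⟩ hq
      simp only [Set.mem_setOf_eq] at hq
      rw [EReal.coe_le_coe_iff]
      have h1 : (inner ℝ β b : ℝ) ≤ ‖β‖ * ‖b‖ := real_inner_le_norm β b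
      rw [le_div_iff₀ (by positivity)]
      nlinarith [sq_nonneg (‖b‖ - ‖β‖ * a), norm_nonneg b, norm_nonneg β,
        mul_le_mul_of_nonneg_right hq (le_of_lt ha)]
  · -- a = 0
    subst ha
    by_cases hb : b = 0
    · subst hb
      rw [bbFun]
      simp only [lt_irrefl, if_false, and_self, if_true, if_neg (lt_irrefl (0:ℝ))]
      apply le_antisymm
      · refine le_trans (le_of_eq ?_)
          (le_iSup₂ (0, (0 : EuclideanSpace ℝ (Fin D))) (by simp))
        simp
      · apply iSup₂_le
        rintro ⟨α, β⟩ _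
        simp
    · rw [bbFun, if_neg (lt_irrefl (0:ℝ)), if_neg (by simp [hb])]
      symm
      apply ereal_eq_top_of_forall
      intro x
      have hbne : ‖b‖ ≠ 0 := norm_ne_zero_iff.mpr hb
      have hbpos : (0:ℝ) < ‖b‖ ^ 2 := by positivity
      set t : ℝ := max (x / ‖b‖ ^ 2) 0 with ht
      have ht0 : 0 ≤ t := le_max_right _ _
      have hmem : ((-(t ^ 2 * ‖b‖ ^ 2) / 2, t • b) : ℝ × EuclideanSpace ℝ (Fin D)) ∈
          {q : ℝ × EuclideanSpace ℝ (Fin D) | q.1 + ‖q.2‖ ^ 2 / 2 ≤ 0} := by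
        simp only [Set.mem_setOf_eq, norm_smul, Real.norm_eq_abs, mul_pow, sq_abs]
        ring_nf
        nlinarith
      refine le_trans ?_ (le_iSup₂ _ hmem)
      rw [EReal.coe_le_coe_iff]
      have : (inner ℝ (t • b) b : ℝ) = t * ‖b‖ ^ 2 := by
        rw [real_inner_smul_left, real_inner_self_eq_norm_sq]
      simp only [mul_zero, zero_add, this]
      have : x / ‖b‖ ^ 2 ≤ t := le_max_left _ _
      calc x = (x / ‖b‖ ^ 2) * ‖b‖ ^ 2 := by field_simp
        _ ≤ t * ‖b‖ ^ 2 := by nlinarith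
  · -- a < 0
    rw [bbFun, if_neg (by linarith), if_neg (by intro h; linarith [h.1])]
    symm
    apply ereal_eq_top_of_forall
    intro x
    set x' : ℝ := max x 0 with hx'
    have hx0 : 0 ≤ x' := le_max_right _ _
    have hmem : ((x' / a, (0 : EuclideanSpace ℝ (Fin D))) : ℝ × EuclideanSpace ℝ (Fin D)) ∈
        {q : ℝ × EuclideanSpace ℝ (Fin D) | q.1 + ‖q.2‖ ^ 2 / 2 ≤ 0} := by
      simp only [Set.mem_setOf_eq, norm_zero]
      have : x' / a ≤ 0 := div_nonpos_of_nonneg_of_nonpos hx0 (le_of_lt ha)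
      simpa using this
    refine le_trans ?_ (le_iSup₂ _ hmem)
    rw [EReal.coe_le_coe_iff]
    simp only [inner_zero_left, add_zero]
    rw [div_mul_cancel₀ _ (ne_of_lt ha)]
    exact le_max_left _ _

/-- B is convex, lower semicontinuous, and is the support function of the parabolic set
    P = {(α, β) : α + ‖β‖²/2 ≤ 0}. -/
theorem bbFun_convex_lsc_support (D : ℕ) :
    (∀ (p q : ℝ × EuclideanSpace ℝ (Fin D)) (t : ℝ), 0 ≤ t → t ≤ 1 →
        bbFun D (t • p + (1 - t) • q) ≤
          (t : EReal) * bbFun D p + ((1 - t : ℝ) : EReal) * bbFun D q) ∧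
      LowerSemicontinuous (bbFun D) ∧
      (∀ p : ℝ × EuclideanSpace ℝ (Fin D),
        bbFun D p =
          ⨆ q ∈ {q : ℝ × EuclideanSpace ℝ (Fin D) | q.1 + ‖q.2‖ ^ 2 / 2 ≤ 0},
            ((q.1 * p.1 + (inner ℝ q.2 p.2 : ℝ) : ℝ) : EReal)) := by
  refine ⟨?_, ?_, bb_sup D⟩
  · intro p q t ht0 ht1
    rw [bb_sup]
    apply iSup₂_le
    rintro c hc
    have hLp : ((c.1 * p.1 + (inner ℝ c.2 p.2 : ℝ) : ℝ) : EReal) ≤ bbFun D p := by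
      rw [bb_sup]
      exact le_iSup₂ (f := fun q _ => ((q.1 * p.1 + (inner ℝ q.2 p.2 : ℝ) : ℝ) : EReal)) c hc
    have hLq : ((c.1 * q.1 + (inner ℝ c.2 q.2 : ℝ) : ℝ) : EReal) ≤ bbFun D q := by
      rw [bb_sup]
      exact le_iSup₂ (f := fun c _ => ((c.1 * q.1 + (inner ℝ c.2 q.2 : ℝ) : ℝ) : EReal)) c hc
    have hval : (c.1 * (t • p + (1 - t) • q).1 + (inner ℝ c.2 (t • p + (1 - t) • q).2 : ℝ) : ℝ)
        = t * (c.1 * p.1 + (inner ℝ c.2 p.2 : ℝ)) + (1 - t) * (c.1 * q.1 + (inner ℝ c.2 q.2 : ℝ)) := by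
      simp only [Prod.fst_add, Prod.smul_fst, smul_eq_mul, Prod.snd_add, Prod.smul_snd,
        inner_add_right, real_inner_smul_right]
      ring
    rw [hval, EReal.coe_add, EReal.coe_mul, EReal.coe_mul]
    exact add_le_add
      (mul_le_mul_of_nonneg_left hLp (by exact_mod_cast ht0))
      (mul_le_mul_of_nonneg_left hLq (by exact_mod_cast (by linarith : (0:ℝ) ≤ 1 - t)))
  · have heq : bbFun D = fun p => ⨆ q ∈ {q : ℝ × EuclideanSpace ℝ (Fin D) |
        q.1 + ‖q.2‖ ^ 2 / 2 ≤ 0}, ((q.1 * p.1 + (inner ℝ q.2 p.2 : ℝ) : ℝ) : EReal) :=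
      funext (bb_sup D)
    rw [heq]
    apply lowerSemicontinuous_biSup
    intro q _
    apply Continuous.lowerSemicontinuous
    exact continuous_coe_real_ereal.comp
      ((continuous_const.mul continuous_fst).add (Continuous.inner continuous_const continuous_snd))
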